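/- Let (S,K,I) be a split graph and let A4(S) be the simple graph on the vertex set of S where two distinct vertices are adjacent iff some induced P4 of S contains both. Suppose u,v ∈ I and x ∈ K are such that both ux and xv are edges of A4(S). Then there exists a path in A4(S) from u to v all of whose vertices belong to I and which has at most 4 vertices. -/

import Mathlib

open SimpleGraph

/-- `T` is a 4-element vertex subset of `S` whose induced subgraph is a path on 4 vertices. -/
def IsInducedP4 {V : Type*} (S : SimpleGraph V) (T : Finset V) : Prop :=
  T.card = 4 ∧ Nonempty (S.induce (T : Set V) ≃g pathGraph 4)

/-- `σ_{uv}(S)`: the number of induced `P4`'s of `S` containing both `u` and `v`. -/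
noncomputable def sigmaP4 {V : Type*} (S : SimpleGraph V) (u v : V) : ℕ :=
  Nat.card {T : Finset V // IsInducedP4 S T ∧ u ∈ T ∧ v ∈ T}

/-- The Barrus--West graph `A₄(S)`: two distinct vertices are adjacent iff some
induced `P4` of `S` contains both. -/
def a4Graph {V : Type*} (S : SimpleGraph V) : SimpleGraph V :=
  SimpleGraph.fromRel (fun u v => ∃ T : Finset V, IsInducedP4 S T ∧ u ∈ T ∧ v ∈ T)

lemma isInducedP4_of_struct {V : Type*} [DecidableEq V] (S : SimpleGraph V) {a b c d : V}
    (hab : a ≠ b) (hac : a ≠ c) (had : a ≠ d) (hbc : b ≠ c) (hbd : b ≠ d) (hcd : c ≠ d)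
    (e1 : S.Adj a b) (e2 : S.Adj b c) (e3 : S.Adj c d)
    (n1 : ¬ S.Adj a c) (n2 : ¬ S.Adj a d) (n3 : ¬ S.Adj b d) :
    IsInducedP4 S {a, b, c, d} := by
  have hcard : ({a, b, c, d} : Finset V).card = 4 := by
    rw [Finset.card_insert_of_notMem (by simp [hab, hac, had]),
      Finset.card_insert_of_notMem (by simp [hbc, hbd]),
      Finset.card_insert_of_notMem (by simp [hcd]), Finset.card_singleton]
  refine ⟨hcard, ?_⟩
  set T : Set V := (({a, b, c, d} : Finset V) : Set V) with hT
  have hmem : ∀ i : Fin 4, (![a, b, c, d] i) ∈ T := by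
    intro i; fin_cases i <;> simp [hT]
  let g : Fin 4 → T := fun i => ⟨![a, b, c, d] i, hmem i⟩
  have hginj : Function.Injective g := by
    intro i j h
    have h' : ![a, b, c, d] i = ![a, b, c, d] j := congrArg Subtype.val h
    fin_cases i <;> fin_cases j <;> simp_all
  have hgsurj : Function.Surjective g := by
    rintro ⟨w, hw⟩
    simp only [hT, Finset.coe_insert, Set.mem_insert_iff, Finset.coe_singleton,
      Set.mem_singleton_iff] at hw
    rcases hw with rfl | rfl | rfl | rfl
    · exact ⟨0, Subtype.ext (by simp [g])⟩
    · exact ⟨1, Subtype.ext (by simp [g])⟩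
    · exact ⟨2, Subtype.ext (by simp [g])⟩
    · exact ⟨3, Subtype.ext (by simp [g])⟩
  refine ⟨RelIso.symm ⟨Equiv.ofBijective g ⟨hginj, hgsurj⟩, ?_⟩⟩
  intro i j
  show (S.induce T).Adj (g i) (g j) ↔ (pathGraph 4).Adj i j
  have hind : ∀ i j : Fin 4, (S.induce T).Adj (g i) (g j) ↔
      S.Adj (![a, b, c, d] i) (![a, b, c, d] j) := fun i j => Iff.rfl
  rw [hind, pathGraph_adj]
  fin_cases i <;> fin_cases j <;>
    simp [e1, e2, e3, e1.symm, e2.symm, e3.symm, n1, n2, n3] <;>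
    first
    | exact fun h => n1 h.symm
    | exact fun h => n2 h.symm
    | exact fun h => n3 h.symm

lemma struct_of_isInducedP4 {V : Type*} [DecidableEq V] {S : SimpleGraph V} {T : Finset V}
    (h : IsInducedP4 S T) :
    ∃ a b c d : V, T = {a, b, c, d} ∧ a ≠ b ∧ a ≠ c ∧ a ≠ d ∧ b ≠ c ∧ b ≠ d ∧ c ≠ d ∧
      S.Adj a b ∧ S.Adj b c ∧ S.Adj c d ∧ ¬S.Adj a c ∧ ¬S.Adj a d ∧ ¬S.Adj b d := by
  obtain ⟨hcard, ⟨e⟩⟩ := h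
  let f := e.symm
  have key : ∀ i j : Fin 4, S.Adj ((f i : (T : Set V)) : V) ((f j : (T : Set V)) : V) ↔
      (pathGraph 4).Adj i j := fun i j => f.map_adj_iff
  have hne : ∀ i j : Fin 4, i ≠ j → ((f i : (T : Set V)) : V) ≠ ((f j : (T : Set V)) : V) := by
    intro i j hij hval
    exact hij (f.toEquiv.injective (Subtype.ext hval))
  have hmem : ∀ i : Fin 4, ((f i : (T : Set V)) : V) ∈ T := fun i => (f i).2
  refine ⟨f 0, f 1, f 2, f 3, ?_,
    hne 0 1 (by decide), hne 0 2 (by decide), hne 0 3 (by decide),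
    hne 1 2 (by decide), hne 1 3 (by decide), hne 2 3 (by decide),
    (key 0 1).mpr (by rw [pathGraph_adj]; decide),
    (key 1 2).mpr (by rw [pathGraph_adj]; decide),
    (key 2 3).mpr (by rw [pathGraph_adj]; decide),
    fun h => by have := (key 0 2).mp h; rw [pathGraph_adj] at this; exact absurd this (by decide),
    fun h => by have := (key 0 3).mp h; rw [pathGraph_adj] at this; exact absurd this (by decide),
    fun h => by have := (key 1 3).mp h; rw [pathGraph_adj] at this; exact absurd this (by decide)⟩
  have hsub : ({(f 0 : V), (f 1 : V), (f 2 : V), (f 3 : V)} : Finset V) ⊆ T := by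
    intro w hw
    simp only [Finset.mem_insert, Finset.mem_singleton] at hw
    rcases hw with rfl | rfl | rfl | rfl <;> exact hmem _
  have hcard' : ({(f 0 : V), (f 1 : V), (f 2 : V), (f 3 : V)} : Finset V).card = 4 := by
    rw [Finset.card_insert_of_notMem, Finset.card_insert_of_notMem,
      Finset.card_insert_of_notMem, Finset.card_singleton]
    · simp only [Finset.mem_singleton]; exact hne 2 3 (by decide)
    · simp only [Finset.mem_insert, Finset.mem_singleton, not_or]
      exact ⟨hne 1 2 (by decide), hne 1 3 (by decide)⟩
    · simp only [Finset.mem_insert, Finset.mem_singleton, not_or]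
      exact ⟨hne 0 1 (by decide), hne 0 2 (by decide), hne 0 3 (by decide)⟩
  exact (Finset.eq_of_subset_of_card_le hsub (by omega)).symm

lemma a4_adj_of_mem {V : Type*} {S : SimpleGraph V} {T : Finset V}
    (hT : IsInducedP4 S T) {w z : V} (hw : w ∈ T) (hz : z ∈ T) (hne : w ≠ z) :
    (a4Graph S).Adj w z := by
  simp only [a4Graph, fromRel_adj]
  exact ⟨hne, Or.inl ⟨T, hT, hw, hz⟩⟩

lemma decompP4 {V : Type*} [Fintype V] [DecidableEq V] {S : SimpleGraph V} {K I : Finset V}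
    (hpart : K ∪ I = Finset.univ) (hdisj : Disjoint K I)
    (hK : S.IsClique (K : Set V)) (hIind : ∀ w z : V, w ∈ I → z ∈ I → ¬S.Adj w z)
    {T : Finset V} (hT : IsInducedP4 S T) {u : V} (huT : u ∈ T) (hu : u ∈ I) :
    ∃ k1 k2 u', T = {u, k1, k2, u'} ∧ k1 ∈ K ∧ k2 ∈ K ∧ u' ∈ I ∧
      u ≠ u' ∧ k1 ≠ k2 ∧
      S.Adj u k1 ∧ S.Adj k1 k2 ∧ S.Adj k2 u' ∧ ¬S.Adj u k2 ∧ ¬S.Adj u u' ∧ ¬S.Adj k1 u' := by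
  have hmem : ∀ w : V, w ∈ K ∨ w ∈ I := by
    intro w
    have := Finset.mem_univ w
    rw [← hpart] at this
    exact Finset.mem_union.mp this
  obtain ⟨a, b, c, d, hTeq, hab, hac, had, hbc, hbd, hcd, e1, e2, e3, n1, n2, n3⟩ :=
    struct_of_isInducedP4 hT
  have haI : a ∈ I := by
    rcases hmem a with haK | haI
    · exfalso
      have hdI : d ∈ I := (hmem d).resolve_left (fun hdK => n2 (hK haK hdK had))
      have hcI : c ∈ I := (hmem c).resolve_left (fun hcK => n1 (hK haK hcK hac))
      exact hIind c d hcI hdI e3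
    · exact haI
  have hdI : d ∈ I := by
    rcases hmem d with hdK | hdI
    · exfalso
      have hbI : b ∈ I := (hmem b).resolve_left (fun hbK => n3 (hK hbK hdK hbd))
      exact hIind a b haI hbI e1
    · exact hdI
  have hbK : b ∈ K := (hmem b).resolve_right fun hbI => absurd e1 (hIind a b haI hbI)
  have hcK : c ∈ K := (hmem c).resolve_right fun hcI => absurd e3 (hIind c d hcI hdI)
  have neKI : ∀ {w z : V}, w ∈ K → z ∈ I → w ≠ z := by
    rintro w z hw hz rfl
    exact Finset.disjoint_left.mp hdisj hw hz
  rw [hTeq] at huT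
  simp only [Finset.mem_insert, Finset.mem_singleton] at huT
  rcases huT with rfl | rfl | rfl | rfl
  · exact ⟨b, c, d, hTeq, hbK, hcK, hdI, had, hbc, e1, e2, e3, n1, n2, n3⟩
  · exact absurd rfl (neKI hbK hu)
  · exact absurd rfl (neKI hcK hu)
  · refine ⟨c, b, a, ?_, hcK, hbK, haI, had.symm, hbc.symm,
      e3.symm, e2.symm, e1.symm, fun h => n3 h.symm, fun h => n2 h.symm, fun h => n1 h.symm⟩
    rw [hTeq]; ext w; simp only [Finset.mem_insert, Finset.mem_singleton]; tauto

lemma path_two {V : Type*} {G : SimpleGraph V} {I : Finset V} {u v : V}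
    (h : G.Adj u v) (hu : u ∈ I) (hv : v ∈ I) :
    ∃ p : G.Walk u v, p.IsPath ∧ (∀ w ∈ p.support, w ∈ I) ∧ p.support.length ≤ 4 := by
  refine ⟨Walk.cons h Walk.nil, ?_, ?_, ?_⟩
  · simp [Walk.isPath_def, h.ne]
  · intro w hw
    simp only [Walk.support_cons, Walk.support_nil, List.mem_cons, List.mem_singleton,
      List.not_mem_nil, or_false] at hw
    rcases hw with rfl | rfl; exacts [hu, hv]
  · simp

lemma path_three {V : Type*} {G : SimpleGraph V} {I : Finset V} {u a v : V}
    (h1 : G.Adj u a) (h2 : G.Adj a v) (huv : u ≠ v)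
    (hu : u ∈ I) (ha : a ∈ I) (hv : v ∈ I) :
    ∃ p : G.Walk u v, p.IsPath ∧ (∀ w ∈ p.support, w ∈ I) ∧ p.support.length ≤ 4 := by
  refine ⟨Walk.cons h1 (Walk.cons h2 Walk.nil), ?_, ?_, ?_⟩
  · simp [Walk.isPath_def, h1.ne, h2.ne, huv]
  · intro w hw
    simp only [Walk.support_cons, Walk.support_nil, List.mem_cons,
      List.not_mem_nil, or_false] at hw
    rcases hw with rfl | rfl | rfl; exacts [hu, ha, hv]
  · simp

lemma path_four {V : Type*} {G : SimpleGraph V} {I : Finset V} {u a b v : V}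
    (h1 : G.Adj u a) (h2 : G.Adj a b) (h3 : G.Adj b v)
    (hub : u ≠ b) (huv : u ≠ v) (hav : a ≠ v)
    (hu : u ∈ I) (ha : a ∈ I) (hb : b ∈ I) (hv : v ∈ I) :
    ∃ p : G.Walk u v, p.IsPath ∧ (∀ w ∈ p.support, w ∈ I) ∧ p.support.length ≤ 4 := by
  refine ⟨Walk.cons h1 (Walk.cons h2 (Walk.cons h3 Walk.nil)), ?_, ?_, ?_⟩
  · simp [Walk.isPath_def, h1.ne, h2.ne, h3.ne, hub, huv, hav]
  · intro w hw
    simp only [Walk.support_cons, Walk.support_nil, List.mem_cons,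
      List.not_mem_nil, or_false] at hw
    rcases hw with rfl | rfl | rfl | rfl; exacts [hu, ha, hb, hv]
  · simp

lemma caseC {V : Type*} [Fintype V] [DecidableEq V] {S : SimpleGraph V} {K I : Finset V}
    (hdisj : Disjoint K I) (hK : S.IsClique (K : Set V))
    (hIind : ∀ w z : V, w ∈ I → z ∈ I → ¬S.Adj w z)
    {u k1 k2 u' v m1 m2 v' : V}
    (hu : u ∈ I) (hu' : u' ∈ I) (hv : v ∈ I) (hv' : v' ∈ I)
    (hk1 : k1 ∈ K) (hk2 : k2 ∈ K) (hm1 : m1 ∈ K) (hm2 : m2 ∈ K)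
    (huu' : u ≠ u') (hk12 : k1 ≠ k2)
    (a1 : S.Adj u k1) (a2 : S.Adj k1 k2) (a3 : S.Adj k2 u')
    (b1 : ¬S.Adj u k2) (b2 : ¬S.Adj u u') (b3 : ¬S.Adj k1 u')
    (hvv' : v ≠ v') (hm12 : m1 ≠ m2)
    (c1 : S.Adj v m1) (c2 : S.Adj m1 m2) (c3 : S.Adj m2 v')
    (d1 : ¬S.Adj v m2) (d2 : ¬S.Adj v v') (d3 : ¬S.Adj m1 v')
    (hx : k1 = m2) (huv : u ≠ v) :
    ∃ p : (a4Graph S).Walk u v, p.IsPath ∧ (∀ w ∈ p.support, w ∈ I) ∧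
      p.support.length ≤ 4 := by
  subst hx
  have neKI : ∀ {w z : V}, w ∈ K → z ∈ I → w ≠ z := by
    rintro w z hw hz rfl
    exact Finset.disjoint_left.mp hdisj hw hz
  -- the two given induced paths, as Finsets
  have hT1 : IsInducedP4 S {u, k1, k2, u'} :=
    isInducedP4_of_struct S (neKI hk1 hu).symm (neKI hk2 hu).symm huu' hk12
      (neKI hk1 hu') (neKI hk2 hu') a1 a2 a3 b1 b2 b3
  have hT2 : IsInducedP4 S {v, m1, k1, v'} :=
    isInducedP4_of_struct S (neKI hm1 hv).symm (neKI hk1 hv).symm hvv' hm12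
      (neKI hm1 hv') (neKI hk1 hv') c1 c2 c3 d1 d2 d3
  have euu' : (a4Graph S).Adj u u' := a4_adj_of_mem hT1 (by simp) (by simp) huu'
  have ev'v : (a4Graph S).Adj v' v := a4_adj_of_mem hT2 (by simp) (by simp) hvv'.symm
  by_cases hvk2 : S.Adj v k2
  · -- direct edge via {u, k1, k2, v}
    have hP : IsInducedP4 S {u, k1, k2, v} :=
      isInducedP4_of_struct S (neKI hk1 hu).symm (neKI hk2 hu).symm huv hk12
        (neKI hk1 hv) (neKI hk2 hv) a1 a2 hvk2.symm b1 (hIind u v hu hv)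
        (fun h => d1 h.symm)
    exact path_two (a4_adj_of_mem hP (by simp) (by simp) huv) hu hv
  · by_cases hum1 : S.Adj u m1
    · have hk2m1 : k2 ≠ m1 := fun h => hvk2 (by rw [h]; exact c1)
      by_cases hu'm1 : S.Adj u' m1
      · -- edge u'-v' via {u', m1, k1, v'}
        have hu'v' : u' ≠ v' := fun h => b3 (by rw [h]; exact c3)
        have hP : IsInducedP4 S {u', m1, k1, v'} :=
          isInducedP4_of_struct S (neKI hm1 hu').symm (neKI hk1 hu').symm hu'v' hm12
            (neKI hm1 hv') (neKI hk1 hv') hu'm1 c2 c3 (fun h => b3 h.symm)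
            (hIind u' v' hu' hv') d3
        have eu'v' : (a4Graph S).Adj u' v' := a4_adj_of_mem hP (by simp) (by simp) hu'v'
        by_cases h1 : u = v'
        · subst h1
          exact path_two ev'v hu hv
        · by_cases h2 : u' = v
          · subst h2
            exact path_two euu' hu hv
          · exact path_four euu' eu'v' ev'v h1 huv h2 hu hu' hv' hv
      · -- edge u'-v via {u', k2, m1, v}
        have hu'v : u' ≠ v := fun h => hvk2 (by rw [← h]; exact a3.symm)
        have hP : IsInducedP4 S {u', k2, m1, v} :=
          isInducedP4_of_struct S (neKI hk2 hu').symm (neKI hm1 hu').symm hu'v hk2m1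
            (neKI hk2 hv) (neKI hm1 hv) a3.symm (hK hk2 hm1 hk2m1) c1.symm hu'm1
            (hIind u' v hu' hv) (fun h => hvk2 h.symm)
        exact path_three euu' (a4_adj_of_mem hP (by simp) (by simp) hu'v) huv hu hu' hv
    · -- direct edge via {u, k1, m1, v}
      have hP : IsInducedP4 S {u, k1, m1, v} :=
        isInducedP4_of_struct S (neKI hk1 hu).symm (neKI hm1 hu).symm huv hm12.symm
          (neKI hk1 hv) (neKI hm1 hv) a1 (hK hk1 hm1 hm12.symm) c1.symm hum1
          (hIind u v hu hv) (fun h => d1 h.symm)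
      exact path_two (a4_adj_of_mem hP (by simp) (by simp) huv) hu hv

theorem stmt15 {V : Type*} [Fintype V] [DecidableEq V] [Nonempty V]
    (S : SimpleGraph V) [DecidableRel S.Adj] (K I : Finset V)
    (hpart : K ∪ I = Finset.univ) (hdisj : Disjoint K I)
    (hK : S.IsClique (K : Set V)) (hI : Sᶜ.IsClique (I : Set V))
    (u v x : V) (hu : u ∈ I) (hv : v ∈ I) (hx : x ∈ K)
    (h1 : (a4Graph S).Adj u x) (h2 : (a4Graph S).Adj x v) :
    ∃ p : (a4Graph S).Walk u v, p.IsPath ∧ (∀ w ∈ p.support, w ∈ I) ∧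
      p.support.length ≤ 4 := by
  by_cases huv : u = v
  · subst huv
    refine ⟨Walk.nil, by simp, ?_, by simp⟩
    intro w hw
    simp only [Walk.support_nil, List.mem_singleton] at hw
    subst hw; exact hu
  have hIind : ∀ w z : V, w ∈ I → z ∈ I → ¬S.Adj w z := by
    intro w z hw hz hadj
    exact ((S.compl_adj w z).mp (hI hw hz hadj.ne)).2 hadj
  have neKI : ∀ {w z : V}, w ∈ K → z ∈ I → w ≠ z := by
    rintro w z hw hz rfl
    exact Finset.disjoint_left.mp hdisj hw hz
  -- extract the two induced P4's
  obtain ⟨hux, hT1e⟩ : u ≠ x ∧ _ := by rw [a4Graph, fromRel_adj] at h1; exact h1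
  have hT1' : ∃ T, IsInducedP4 S T ∧ u ∈ T ∧ x ∈ T := by
    rcases hT1e with ⟨T, h, ha, hb⟩ | ⟨T, h, ha, hb⟩
    exacts [⟨T, h, ha, hb⟩, ⟨T, h, hb, ha⟩]
  obtain ⟨T1, hT1P, huT1, hxT1⟩ := hT1'
  obtain ⟨hxv, hT2e⟩ : x ≠ v ∧ _ := by rw [a4Graph, fromRel_adj] at h2; exact h2
  have hT2' : ∃ T, IsInducedP4 S T ∧ v ∈ T ∧ x ∈ T := by
    rcases hT2e with ⟨T, h, ha, hb⟩ | ⟨T, h, ha, hb⟩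
    exacts [⟨T, h, hb, ha⟩, ⟨T, h, ha, hb⟩]
  obtain ⟨T2, hT2P, hvT2, hxT2⟩ := hT2'
  obtain ⟨k1, k2, u', hT1eq, hk1, hk2, hu', huu', hk12, a1, a2, a3, b1, b2, b3⟩ :=
    decompP4 hpart hdisj hK hIind hT1P huT1 hu
  obtain ⟨m1, m2, v', hT2eq, hm1, hm2, hv', hvv', hm12, c1, c2, c3, d1, d2, d3⟩ :=
    decompP4 hpart hdisj hK hIind hT2P hvT2 hv
  -- locate x inside each P4
  have hxk : x = k1 ∨ x = k2 := by
    rw [hT1eq] at hxT1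
    simp only [Finset.mem_insert, Finset.mem_singleton] at hxT1
    rcases hxT1 with rfl | rfl | rfl | rfl
    · exact absurd rfl (neKI hx hu).symm
    · exact Or.inl rfl
    · exact Or.inr rfl
    · exact absurd rfl (neKI hx hu').symm
  have hxm : x = m1 ∨ x = m2 := by
    rw [hT2eq] at hxT2
    simp only [Finset.mem_insert, Finset.mem_singleton] at hxT2
    rcases hxT2 with rfl | rfl | rfl | rfl
    · exact absurd rfl (neKI hx hv).symm
    · exact Or.inl rfl
    · exact Or.inr rfl
    · exact absurd rfl (neKI hx hv').symm
  have hT1F : IsInducedP4 S {u, k1, k2, u'} :=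
    isInducedP4_of_struct S (neKI hk1 hu).symm (neKI hk2 hu).symm huu' hk12
      (neKI hk1 hu') (neKI hk2 hu') a1 a2 a3 b1 b2 b3
  have hT2F : IsInducedP4 S {v, m1, m2, v'} :=
    isInducedP4_of_struct S (neKI hm1 hv).symm (neKI hm2 hv).symm hvv' hm12
      (neKI hm1 hv') (neKI hm2 hv') c1 c2 c3 d1 d2 d3
  have euu' : (a4Graph S).Adj u u' := a4_adj_of_mem hT1F (by simp) (by simp) huu'
  have ev'v : (a4Graph S).Adj v' v := a4_adj_of_mem hT2F (by simp) (by simp) hvv'.symm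
  rcases hxk with rfl | rfl
  · rcases hxm with hkm | hkm
    · -- Case B : x = k1 = m1
      subst hkm
      by_cases hvk2 : S.Adj v k2
      · by_cases hum2 : S.Adj u m2
        · -- direct edge via {u, m2, k2, v}
          have hk2m2 : k2 ≠ m2 := fun h => b1 (by rw [h]; exact hum2)
          have hP : IsInducedP4 S {u, m2, k2, v} :=
            isInducedP4_of_struct S (neKI hm2 hu).symm (neKI hk2 hu).symm huv hk2m2.symm
              (neKI hm2 hv) (neKI hk2 hv) hum2 (hK hm2 hk2 hk2m2.symm) hvk2.symm
              b1 (hIind u v hu hv) (fun h => d1 h.symm)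
          exact path_two (a4_adj_of_mem hP (by simp) (by simp) huv) hu hv
        · -- edge u-v' via {v', m2, x, u}
          have huv' : u ≠ v' := fun h => hum2 (by rw [h]; exact c3.symm)
          have hP : IsInducedP4 S {v', m2, x, u} :=
            isInducedP4_of_struct S (neKI hm2 hv').symm (neKI hx hv').symm huv'.symm
              hm12.symm (neKI hm2 hu) (neKI hx hu) c3.symm c2.symm a1.symm
              (fun h => d3 h.symm) (hIind v' u hv' hu) (fun h => hum2 h.symm)
          exact path_three (a4_adj_of_mem hP (by simp) (by simp) huv') ev'v huv hu hv' hv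
      · -- edge u'-v via {v, x, k2, u'}
        have hu'v : u' ≠ v := fun h => hvk2 (by rw [← h]; exact a3.symm)
        have hP : IsInducedP4 S {v, x, k2, u'} :=
          isInducedP4_of_struct S (neKI hx hv).symm (neKI hk2 hv).symm hu'v.symm hk12
            (neKI hx hu') (neKI hk2 hu') c1 a2 a3 hvk2 (hIind v u' hv hu') b3
        exact path_three euu' (a4_adj_of_mem hP (by simp) (by simp) hu'v) huv hu hu' hv
    · -- Case C : x = k1 = m2
      exact caseC hdisj hK hIind hu hu' hv hv' hk1 hk2 hm1 hm2 huu' hk12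
        a1 a2 a3 b1 b2 b3 hvv' hm12 c1 c2 c3 d1 d2 d3 hkm huv
  · rcases hxm with hkm | hkm
    · -- Case D : x = k2 = m1 : apply caseC with roles swapped, then reverse
      obtain ⟨p, hp, hps, hpl⟩ := caseC hdisj hK hIind hv hv' hu hu' hm1 hm2 hk1 hk2
        hvv' hm12 c1 c2 c3 d1 d2 d3 huu' hk12 a1 a2 a3 b1 b2 b3 hkm.symm
        (fun h => huv h.symm)
      refine ⟨p.reverse, hp.reverse, ?_, ?_⟩
      · intro w hw
        rw [Walk.support_reverse, List.mem_reverse] at hw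
        exact hps w hw
      · rw [Walk.support_reverse, List.length_reverse]
        exact hpl
    · -- Case A : x = k2 = m2
      subst hkm
      by_cases hvk1 : S.Adj v k1
      · -- edge u'-v via {v, k1, x, u'}
        have hu'v : u' ≠ v := fun h => d1 (by rw [← h]; exact a3.symm)
        have hP : IsInducedP4 S {v, k1, x, u'} :=
          isInducedP4_of_struct S (neKI hk1 hv).symm (neKI hx hv).symm hu'v.symm hk12
            (neKI hk1 hu') (neKI hx hu') hvk1 a2 a3 d1 (hIind v u' hv hu') b3
        exact path_three euu' (a4_adj_of_mem hP (by simp) (by simp) hu'v) huv hu hu' hv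
      · by_cases hum1 : S.Adj u m1
        · -- edge u-v' via {u, m1, x, v'}
          have huv' : u ≠ v' := fun h => b1 (by rw [h]; exact c3.symm)
          have hP : IsInducedP4 S {u, m1, x, v'} :=
            isInducedP4_of_struct S (neKI hm1 hu).symm (neKI hx hu).symm huv' hm12
              (neKI hm1 hv') (neKI hx hv') hum1 c2 c3 b1 (hIind u v' hu hv') d3
          exact path_three (a4_adj_of_mem hP (by simp) (by simp) huv') ev'v huv hu hv' hv
        · -- direct edge via {u, k1, m1, v}
          have hk1m1 : k1 ≠ m1 := fun h => hvk1 (by rw [h]; exact c1)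
          have hP : IsInducedP4 S {u, k1, m1, v} :=
            isInducedP4_of_struct S (neKI hk1 hu).symm (neKI hm1 hu).symm huv hk1m1
              (neKI hk1 hv) (neKI hm1 hv) a1 (hK hk1 hm1 hk1m1) c1.symm hum1
              (hIind u v hu hv) (fun h => hvk1 h.symm)
          exact path_two (a4_adj_of_mem hP (by simp) (by simp) huv) hu hv
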